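/- Let H : ℝ → ℝ be a bounded C⁴ function with H(0) = 0, H even, and C_4 := max_{0≤p≤4} sup_η |H^{(p)}(η)| < ∞. Then for every a ≥ 0, D_1(H, a) ≥ D_1(H, 0)² / ( (3/2) C_4 a² + 4 D_1(H, 0) ). -/

import Mathlib

open MeasureTheory Real Filter

noncomputable section

/-- `D_N(H,a) = sup_{η ≠ 0} |Σⱼ H(ηⱼ) Γ_{N-1}(η^j)| / (a² + |η|²)`, where
`Γ_{N-1}(η^j) = ∏_{i≠j} e^{-π ηᵢ²}`. -/
def DN (N : ℕ) (H : ℝ → ℝ) (a : ℝ) : ℝ :=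
  ⨆ η : {η : Fin N → ℝ // η ≠ 0},
    |∑ j, H (η.1 j) * ∏ i ∈ Finset.univ.erase j, Real.exp (-Real.pi * (η.1 i) ^ 2)| /
      (a ^ 2 + ∑ i, (η.1 i) ^ 2)

/-- `C₄ = max_{p ≤ 4} sup_η |H⁽ᵖ⁾(η)|`. -/
def derivBound4 (H : ℝ → ℝ) : ℝ :=
  ⨆ p : Fin 5, ⨆ η : ℝ, |iteratedDeriv (p : ℕ) H η|

lemma iterW {H : ℝ → ℝ} (hC : ContDiff ℝ 4 H) (m : ℕ) (hm : m ≤ 4)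
    {s : Set ℝ} (hs : UniqueDiffOn ℝ s) {x : ℝ} (hx : x ∈ s) :
    iteratedDerivWithin m H s x = iteratedDeriv m H x := by
  rw [iteratedDerivWithin_eq_iteratedFDerivWithin, iteratedDeriv_eq_iteratedFDeriv]
  have h := (contDiff_iff_ftaylorSeries.mp hC).hasFTaylorSeriesUpToOn s
  rw [← h.eq_iteratedFDerivWithin_of_uniqueDiffOn (by exact_mod_cast hm) hs hx,
    (contDiff_iff_ftaylorSeries.mp hC).eq_iteratedFDeriv (by exact_mod_cast hm) x]

lemma taylorB {H : ℝ → ℝ} (hC : ContDiff ℝ 4 H) {n : ℕ} (hn : n + 1 ≤ 4) {x : ℝ} (hx : 0 < x)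
    {C : ℝ} (hb : ∀ y, |iteratedDeriv (n+1) H y| ≤ C) :
    |H x - ∑ k ∈ Finset.range (n+1), ((Nat.factorial k : ℝ)⁻¹ * x ^ k) * iteratedDeriv k H 0|
      ≤ C * x ^ (n+1) / (Nat.factorial (n+1)) := by
  have hs : UniqueDiffOn ℝ (Set.Icc (0:ℝ) x) := uniqueDiffOn_Icc hx
  have hdo : DifferentiableOn ℝ (iteratedDerivWithin n H (Set.Icc 0 x)) (Set.Ioo 0 x) := by
    apply DifferentiableOn.congr
      (f := iteratedDeriv n H)
      ((hC.differentiable_iteratedDeriv n (by exact_mod_cast Nat.lt_of_succ_le hn)).differentiableOn)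
    intro y hy
    exact iterW hC n (Nat.le_of_succ_le hn) hs (Set.mem_Icc_of_Ioo hy)
  have hI : Set.uIcc 0 x = Set.Icc 0 x := Set.uIcc_of_le hx.le
  have hO : Set.uIoo 0 x = Set.Ioo 0 x := Set.uIoo_of_le hx.le
  obtain ⟨x', hx', heq⟩ := taylor_mean_remainder_lagrange (f := H) (n := n) hx.ne
    (by rw [hI]; exact (hC.of_le (by exact_mod_cast Nat.le_of_succ_le hn)).contDiffOn)
    (by rw [hI, hO]; exact hdo)
  rw [hO] at hx'
  rw [hI] at heq
  have ht : taylorWithinEval H n (Set.Icc 0 x) 0 x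
      = ∑ k ∈ Finset.range (n+1), ((Nat.factorial k : ℝ)⁻¹ * x ^ k) * iteratedDeriv k H 0 := by
    rw [taylor_within_apply]
    refine Finset.sum_congr rfl fun k hk => ?_
    rw [iterW hC k (le_trans (Nat.le_of_lt_succ (Finset.mem_range.mp hk)) (Nat.le_of_succ_le hn))
      hs (Set.left_mem_Icc.mpr hx.le)]
    simp [smul_eq_mul]
  rw [← ht, heq, iterW hC (n+1) hn hs (Set.mem_Icc_of_Ioo hx')]
  rw [abs_div, abs_mul, abs_of_nonneg (by rw [sub_zero]; positivity : (0:ℝ) ≤ (x - 0) ^ (n+1)),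
    abs_of_nonneg (by positivity : (0:ℝ) ≤ (Nat.factorial (n+1) : ℝ))]
  apply div_le_div_of_nonneg_right ?_ (by positivity)
  rw [sub_zero]
  exact mul_le_mul_of_nonneg_right (hb x') (by positivity)

set_option maxHeartbeats 1000000 in
/-- **Lemma 6 (`firststep`)**: `D₁(H,a) ≥ D₁(H,0)² / ((3/2)C₄ a² + 4 D₁(H,0))`. -/
theorem D1_lower_bound (H : ℝ → ℝ) (hC : ContDiff ℝ 4 H)
    (hbdd : ∀ p : Fin 5, BddAbove (Set.range fun η => |iteratedDeriv (p : ℕ) H η|))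
    (hH0 : H 0 = 0) (heven : ∀ η, H η = H (-η))
    (a : ℝ) (ha : 0 ≤ a) :
    DN 1 H 0 ^ 2 / (3 / 2 * derivBound4 H * a ^ 2 + 4 * DN 1 H 0) ≤ DN 1 H a := by
  set C : ℝ := derivBound4 H with hCdef
  -- pointwise derivative bounds
  have hCb : ∀ p : Fin 5, ∀ y : ℝ, |iteratedDeriv (p : ℕ) H y| ≤ C := by
    intro p y
    refine le_trans (le_ciSup (hbdd p) y) ?_
    exact le_ciSup (f := fun q : Fin 5 => ⨆ η : ℝ, |iteratedDeriv (q : ℕ) H η|)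
      ((Set.finite_range _).bddAbove) p
  have hC0 : 0 ≤ C := le_trans (abs_nonneg _) (by simpa using hCb 0 0)
  -- odd derivatives vanish at 0
  have hHneg : H = fun x => H (-x) := funext fun x => heven x
  have hodd : ∀ n : ℕ, Odd n → iteratedDeriv n H 0 = 0 := by
    intro n hn
    have h := iteratedDeriv_comp_neg n H 0
    rw [← hHneg, neg_zero, hn.neg_one_pow, smul_eq_mul] at h
    linarith [h]
  have h1 : iteratedDeriv 1 H 0 = 0 := hodd 1 ⟨0, rfl⟩
  have h3 : iteratedDeriv 3 H 0 = 0 := hodd 3 ⟨1, rfl⟩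
  -- Taylor bounds
  have hA : ∀ x : ℝ, 0 < x → |H x| ≤ C * x ^ 2 / 2 := by
    intro x hx
    have h := taylorB hC (n := 1) (by norm_num) hx (fun y => hCb 2 y)
    have e : ∑ k ∈ Finset.range (1+1), ((Nat.factorial k : ℝ)⁻¹ * x ^ k) * iteratedDeriv k H 0
        = 0 := by
      rw [Finset.sum_range_succ, Finset.sum_range_one]
      simp [hH0, h1]
    rw [e, sub_zero] at h
    calc |H x| ≤ C * x ^ (1+1) / (Nat.factorial (1+1)) := h
      _ = C * x ^ 2 / 2 := by norm_num [Nat.factorial]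
  have hA' : ∀ x : ℝ, x ≠ 0 → |H x| ≤ C * x ^ 2 / 2 := by
    intro x hx
    rcases hx.lt_or_gt with h | h
    · have := hA (-x) (by linarith)
      rw [← heven x] at this
      simpa using this
    · exact hA x h
  set d2 : ℝ := iteratedDeriv 2 H 0 with hd2
  have hB : ∀ x : ℝ, 0 < x → |H x - x ^ 2 / 2 * d2| ≤ C * x ^ 4 / 24 := by
    intro x hx
    have h := taylorB hC (n := 3) (by norm_num) hx (fun y => hCb 4 y)
    have e : ∑ k ∈ Finset.range (3+1), ((Nat.factorial k : ℝ)⁻¹ * x ^ k) * iteratedDeriv k H 0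
        = x ^ 2 / 2 * d2 := by
      rw [Finset.sum_range_succ, Finset.sum_range_succ, Finset.sum_range_succ,
        Finset.sum_range_one]
      simp only [Nat.factorial, iteratedDeriv_zero, hH0, h1, h3, ← hd2]
      push_cast
      ring
    rw [e] at h
    calc |H x - x ^ 2 / 2 * d2| ≤ C * x ^ (3+1) / (Nat.factorial (3+1)) := h
      _ = C * x ^ 4 / 24 := by norm_num [Nat.factorial]
  -- rewrite DN 1
  have hDN : ∀ b : ℝ, DN 1 H b
      = ⨆ η : {η : Fin 1 → ℝ // η ≠ 0}, |H (η.1 0)| / (b ^ 2 + (η.1 0) ^ 2) := by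
    intro b
    unfold DN
    congr 1
    funext η
    simp [Fin.sum_univ_one, show (Finset.univ.erase (0 : Fin 1)) = ∅ from by decide]
  have hne0 : ∀ η : {η : Fin 1 → ℝ // η ≠ 0}, η.1 0 ≠ 0 := by
    intro η h
    exact η.2 (funext fun i => by rw [Subsingleton.elim i 0]; exact h)
  have hmk : ∀ x : ℝ, x ≠ 0 → (fun _ : Fin 1 => x) ≠ (0 : Fin 1 → ℝ) :=
    fun x hx h => hx (congrFun h 0)
  haveI : Nonempty {η : Fin 1 → ℝ // η ≠ 0} := ⟨⟨fun _ => 1, hmk 1 one_ne_zero⟩⟩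
  -- pointwise bound on the sup terms and boundedness
  have hpt : ∀ b : ℝ, ∀ η : {η : Fin 1 → ℝ // η ≠ 0},
      |H (η.1 0)| / (b ^ 2 + (η.1 0) ^ 2) ≤ C / 2 := by
    intro b η
    have hx := hne0 η
    have hden : (0:ℝ) < b ^ 2 + (η.1 0) ^ 2 := by positivity
    rw [div_le_iff₀ hden]
    calc |H (η.1 0)| ≤ C * (η.1 0) ^ 2 / 2 := hA' _ hx
      _ ≤ C / 2 * (b ^ 2 + (η.1 0) ^ 2) := by nlinarith [sq_nonneg b, sq_nonneg (η.1 0)]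
  have hbdd' : ∀ b : ℝ, BddAbove (Set.range fun η : {η : Fin 1 → ℝ // η ≠ 0} =>
      |H (η.1 0)| / (b ^ 2 + (η.1 0) ^ 2)) := by
    intro b
    exact ⟨C / 2, by rintro _ ⟨η, rfl⟩; exact hpt b η⟩
  set D : ℝ := DN 1 H 0 with hDdef
  have hD0 : 0 ≤ D := by
    rw [hDdef, hDN 0]
    exact Real.iSup_nonneg fun η => by positivity
  have hDa0 : 0 ≤ DN 1 H a := by
    rw [hDN a]
    exact Real.iSup_nonneg fun η => by positivity
  rcases eq_or_lt_of_le hD0 with heq | hDpos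
  · rw [← heq]
    simpa using hDa0
  -- D > 0 case
  have hDC : D ≤ C / 2 := by
    rw [hDdef, hDN 0]
    exact ciSup_le fun η => hpt 0 η
  have hCpos : 0 < C := by linarith
  set t : ℝ := 6 * D / C with htdef
  have htpos : 0 < t := by positivity
  have hat : 0 < a ^ 2 + t := by positivity
  -- key claim
  have key : ∀ ε : ℝ, 0 < ε → (D / 4 - ε) * (t / (a ^ 2 + t)) ≤ DN 1 H a := by
    intro ε hε
    rcases le_or_gt (D / 4 - ε) 0 with hneg | hposε
    · exact le_trans (mul_nonpos_of_nonpos_of_nonneg hneg (by positivity)) hDa0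
    have hεD : ε < D / 4 := by linarith
    -- pick a near-optimal point for D
    have hlt : D - ε < ⨆ η : {η : Fin 1 → ℝ // η ≠ 0}, |H (η.1 0)| / ((0:ℝ) ^ 2 + (η.1 0) ^ 2) := by
      rw [← hDN 0, ← hDdef]
      linarith
    obtain ⟨η, hη⟩ := exists_lt_of_lt_ciSup hlt
    set x : ℝ := |η.1 0| with hxdef
    have hx0 : 0 < x := abs_pos.mpr (hne0 η)
    have hHx : H x = H (η.1 0) := by
      rcases abs_cases (η.1 0) with ⟨h, _⟩ | ⟨h, _⟩
      · rw [hxdef, h]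
      · rw [hxdef, h, ← heven]
    have hη' : D - ε < |H x| / x ^ 2 := by
      have : (0:ℝ) ^ 2 + (η.1 0) ^ 2 = x ^ 2 := by rw [hxdef]; simp [sq_abs]
      rwa [this, ← hHx] at hη
    have hDa_ge : ∀ y : ℝ, 0 < y → |H y| / (a ^ 2 + y ^ 2) ≤ DN 1 H a := by
      intro y hy
      rw [hDN a]
      exact le_ciSup (hbdd' a) ⟨fun _ => y, hmk y hy.ne'⟩
    rcases le_or_gt t (x ^ 2) with hc | hc
    · -- x is not too small: use x itself
      have hax : 0 < a ^ 2 + x ^ 2 := by positivity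
      have hmono : t / (a ^ 2 + t) ≤ x ^ 2 / (a ^ 2 + x ^ 2) := by
        rw [div_le_div_iff₀ hat hax]
        nlinarith [sq_nonneg a]
      calc (D / 4 - ε) * (t / (a ^ 2 + t))
          ≤ (D - ε) * (x ^ 2 / (a ^ 2 + x ^ 2)) := by
            apply mul_le_mul (by linarith) hmono (by positivity) (by linarith)
        _ ≤ |H x| / (a ^ 2 + x ^ 2) := by
            rw [mul_div_assoc']
            apply div_le_div_of_nonneg_right ?_ hax.le
            exact ((lt_div_iff₀ (by positivity : (0:ℝ) < x ^ 2)).mp hη').le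
        _ ≤ DN 1 H a := hDa_ge x hx0
    · -- x is small: use y = sqrt t
      have hd2big : 3 * D / 4 - ε < |d2| / 2 := by
        have hb := hB x hx0
        have h1 : D - ε < (x ^ 2 / 2 * |d2| + C * x ^ 4 / 24) / x ^ 2 := by
          refine lt_of_lt_of_le hη' ?_
          apply div_le_div_of_nonneg_right ?_ (by positivity)
          calc |H x| ≤ |x ^ 2 / 2 * d2| + C * x ^ 4 / 24 := by
                have := abs_sub_abs_le_abs_sub (H x) (x ^ 2 / 2 * d2)
                linarith [hb]
            _ = x ^ 2 / 2 * |d2| + C * x ^ 4 / 24 := by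
                rw [abs_mul, abs_of_nonneg (by positivity : (0:ℝ) ≤ x ^ 2 / 2)]
        have h2 : (x ^ 2 / 2 * |d2| + C * x ^ 4 / 24) / x ^ 2 = |d2| / 2 + C * x ^ 2 / 24 := by
          field_simp
        rw [h2] at h1
        have h3 : C * x ^ 2 / 24 < C * t / 24 := by
          have := mul_lt_mul_of_pos_left hc hCpos
          linarith
        have h4 : C * t / 24 = D / 4 := by
          rw [htdef]; field_simp; ring
        linarith
      set y : ℝ := Real.sqrt t with hydef
      have hy0 : 0 < y := Real.sqrt_pos.mpr htpos
      have hy2 : y ^ 2 = t := Real.sq_sqrt htpos.le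
      have hby := hB y hy0
      have hHy : t * (D / 2 - ε) ≤ |H y| := by
        have e1 : |y ^ 2 / 2 * d2| = t / 2 * |d2| := by
          rw [abs_mul, abs_of_nonneg (by positivity : (0:ℝ) ≤ y ^ 2 / 2), hy2]
        have e2 : C * y ^ 4 / 24 = D / 4 * t := by
          have : y ^ 4 = t ^ 2 := by rw [← hy2]; ring
          rw [this, htdef]; field_simp; ring
        have := abs_sub_abs_le_abs_sub (y ^ 2 / 2 * d2) (H y)
        rw [abs_sub_comm (y ^ 2 / 2 * d2) (H y)] at this
        have h5 : t / 2 * |d2| - D / 4 * t ≤ |H y| := by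
          rw [← e1, ← e2]; linarith [hby]
        have h6 : t * (3 * D / 4 - ε) ≤ t * (|d2| / 2) :=
          mul_le_mul_of_nonneg_left hd2big.le htpos.le
        calc t * (D / 2 - ε) = t * (3 * D / 4 - ε) - D / 4 * t := by ring
          _ ≤ t * (|d2| / 2) - D / 4 * t := sub_le_sub_right h6 _
          _ = t / 2 * |d2| - D / 4 * t := by ring
          _ ≤ |H y| := h5
      calc (D / 4 - ε) * (t / (a ^ 2 + t))
          ≤ (D / 2 - ε) * (t / (a ^ 2 + t)) := by
            apply mul_le_mul_of_nonneg_right (by linarith) (by positivity)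
        _ ≤ |H y| / (a ^ 2 + y ^ 2) := by
            rw [hy2, mul_div_assoc']
            apply div_le_div_of_nonneg_right ?_ hat.le
            linarith [hHy]
        _ ≤ DN 1 H a := hDa_ge y hy0
  -- pass to the limit ε → 0
  set k : ℝ := t / (a ^ 2 + t) with hkdef
  have hkpos : 0 < k := by positivity
  have hlim : D / 4 * k ≤ DN 1 H a := by
    apply le_of_forall_sub_le
    intro δ hδ
    have hk := key (δ / k) (by positivity)
    have e : (D / 4 - δ / k) * k = D / 4 * k - δ := by
      rw [sub_mul, div_mul_cancel₀ _ hkpos.ne']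
    rw [e] at hk
    exact hk
  -- final algebra
  refine le_trans ?_ hlim
  have e : D / 4 * k = 3 / 2 * D ^ 2 / (C * a ^ 2 + 6 * D) := by
    rw [hkdef, htdef]
    field_simp
    ring
  have hden : (0:ℝ) < 3 / 2 * C * a ^ 2 + 4 * D := by positivity
  rw [e, div_le_div_iff₀ hden (by positivity)]
  nlinarith [mul_nonneg (mul_nonneg (sq_nonneg D) hC0) (sq_nonneg a)]
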